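/- Let h be a complete dg Lie algebra over a ℚ-algebra, let n ≥ 1 be an integer, and let φ ∈ MC(h) be a Maurer–Cartan element with φ ∈ F^n h. Consider the homology class θ_n := [π_{n+1}(φ)] ∈ H_{-1}(h/F^{n+1} h), where π_{n+1} : h → h/F^{n+1} h is the canonical projection. Then θ_n = 0 if and only if there exists υ ∈ h_0 such that υ·φ ∈ F^{n+1} h. -/
import Mathlib


/-!
Framework: complete (ℤ-graded) differential graded Lie algebras over a commutative
ring, Maurer--Cartan elements, the gauge action (defined by its exponential series,
using the completeness of the filtration), gauge triviality sequences and the gauge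
equivalence degree, following the paper.
-/

open scoped BigOperators

noncomputable section

namespace PaperGauge

variable {R : Type*} [CommRing R]

/-- The limit of a sequence with respect to a complete descending filtration:
the (unique, by separatedness) element `y` with `y - x n ∈ F (n+1)` for all `n`,
when such an element exists. -/
noncomputable def limOfF {N : Type*} [AddCommGroup N] [Module R N]
    (F : ℕ → Submodule R N) (x : ℕ → N) : N := by
  classical exact if h : ∃ y : N, ∀ n, y - x n ∈ F (n + 1) then h.choose else 0

/-- The gauge action series
`λ · φ = e^{ad_λ}(φ) - ((e^{ad_λ} - id)/ad_λ)(D λ)`,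
defined as the limit (w.r.t. the complete filtration `F`) of its partial sums;
`ad` is the adjoint action `ad lam y = [lam, y]` and `D` is the differential. -/
noncomputable def gaugeSeries {N : Type*} [AddCommGroup N] [Module R N] [Algebra ℚ R]
    (F : ℕ → Submodule R N) (ad : N → N → N) (D : N → N) (lam φ : N) : N :=
  limOfF F (fun M =>
    (∑ k ∈ Finset.range (M + 1),
        algebraMap ℚ R ((Nat.factorial k : ℚ))⁻¹ • ((ad lam)^[k] φ)) -
      ∑ k ∈ Finset.range (M + 1),
        algebraMap ℚ R ((Nat.factorial (k + 1) : ℚ))⁻¹ • ((ad lam)^[k] (D lam)))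

/-- Vanishing of the obstruction class
`θ_k = [π_{k+1} x] ∈ H_{-1}(h / F^{k+1} h)` (for `x ∈ F^k` of homological degree `-1`
which is a cycle in the quotient): the class is zero precisely when `x` is, modulo
`F^{k+1}`, the boundary `D υ` of a degree-`0` element `υ`. Here `gr0` is the degree-`0`
part and `D` is the (possibly twisted) differential. -/
def ObstructionZeroG {N : Type*} [AddCommGroup N] [Module R N] (F : ℕ → Submodule R N)
    (gr0 : Submodule R N) (D : N → N) (k : ℕ) (x : N) : Prop :=
  ∃ υ ∈ gr0, x - D υ ∈ F (k + 1)

/-- `φ` admits a gauge triviality sequence `(θ_k)_{1 ≤ k ≤ n}` (Construction 1.9):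
a sequence of Maurer--Cartan elements `Φ k` and gauges `υ k` with `Φ 1 = φ`, where as
long as `k < n` the obstruction class `θ_k = [π_{k+1}(Φ k)]` vanishes and the chosen
gauge pushes `Φ k` into `F^{k+1}`, and (if `n` is finite) the final class `θ_n` is
nonzero. The differential `D` may be a twisted one. -/
def HasGTSeqG {N : Type*} [AddCommGroup N] [Module R N] [Algebra ℚ R]
    (F : ℕ → Submodule R N) (gr0 : Submodule R N) (ad : N → N → N) (D : N → N)
    (φ : N) (n : ℕ∞) : Prop :=
  ∃ (Φ : ℕ → N) (υ : ℕ → N), Φ 1 = φ ∧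
    (∀ k : ℕ, 1 ≤ k → (k : ℕ∞) < n →
      ObstructionZeroG F gr0 D k (Φ k) ∧ υ k ∈ gr0 ∧
        Φ (k + 1) = gaugeSeries F ad D (υ k) (Φ k) ∧ Φ (k + 1) ∈ F (k + 1)) ∧
    (∀ k : ℕ, 1 ≤ k → (k : ℕ∞) = n → ¬ ObstructionZeroG F gr0 D k (Φ k))

/-- A `δ`-weight grading (Definition 1.16) on a filtered dg module, encoded by its
family of weight projections `p k` (`k ≥ 1`): the projections are orthogonal
idempotents, the filtration is `F^n = ∏_{k ≥ n} (weight k part)`, the projections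
preserve the homological grading, the bracket adds weights, and the differential
decomposes as `d = d_0 + d_δ`. -/
structure WeightData {N : Type*} [AddCommGroup N] [Module R N]
    (gr : ℤ → Submodule R N) (F : ℕ → Submodule R N)
    (br : N → N → N) (D : N → N) (δ : ℕ) where
  p : ℕ → N →ₗ[R] N
  p_zero : p 0 = 0
  p_proj : ∀ k j x, p k (p j x) = if k = j then p k x else 0
  mem_F_iff : ∀ (n : ℕ) (x : N), x ∈ F n ↔ ∀ k < n, p k x = 0
  p_gr : ∀ (k : ℕ) (i : ℤ) (x : N), x ∈ gr i → p k x ∈ gr i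
  br_wt : ∀ (k l j : ℕ) (x y : N), j ≠ k + l → p j (br (p k x) (p l y)) = 0
  d_wt : ∀ (k j : ℕ) (x : N), j ≠ k → j ≠ k + δ → p j (D (p k x)) = 0

/-- A complete differential graded Lie algebra over `R` (Definition 1.1): a ℤ-graded
`R`-module with a degree-`0` graded Lie bracket, a degree `-1` differential, and a
complete descending filtration `g = F^1 ⊇ F^2 ⊇ ⋯` compatible with the bracket. -/
structure CompleteDGLA (R : Type*) [CommRing R] (L : Type*) [AddCommGroup L]
    [Module R L] where
  bracket : L →ₗ[R] L →ₗ[R] L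
  gr : ℤ → Submodule R L
  F : ℕ → Submodule R L
  d : L →ₗ[R] L
  F_one : F 1 = ⊤
  F_antitone : ∀ n, F (n + 1) ≤ F n
  separated : ∀ x : L, (∀ n, x ∈ F n) → x = 0
  complete : ∀ x : ℕ → L, (∀ n, x (n + 1) - x n ∈ F (n + 1)) →
    ∃ y : L, ∀ n, y - x n ∈ F (n + 1)
  bracket_gr : ∀ (i j : ℤ) (x y : L), x ∈ gr i → y ∈ gr j → bracket x y ∈ gr (i + j)
  bracket_F : ∀ (m n : ℕ) (x y : L), x ∈ F m → y ∈ F n → bracket x y ∈ F (m + n)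
  antisymm : ∀ (i j : ℤ) (x y : L), x ∈ gr i → y ∈ gr j →
    bracket x y = -(((Int.negOnePow (i * j) : ℤˣ) : ℤ) • bracket y x)
  jacobi : ∀ (i j : ℤ) (x y z : L), x ∈ gr i → y ∈ gr j →
    bracket x (bracket y z) =
      bracket (bracket x y) z + ((Int.negOnePow (i * j) : ℤˣ) : ℤ) • bracket y (bracket x z)
  d_gr : ∀ (i : ℤ) (x : L), x ∈ gr i → d x ∈ gr (i - 1)
  d_F : ∀ (n : ℕ) (x : L), x ∈ F n → d x ∈ F n
  d_sq : ∀ x : L, d (d x) = 0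
  leibniz : ∀ (i : ℤ) (x y : L), x ∈ gr i →
    d (bracket x y) = bracket (d x) y + ((Int.negOnePow i : ℤˣ) : ℤ) • bracket x (d y)

namespace CompleteDGLA

variable {R : Type*} [CommRing R] {L : Type*} [AddCommGroup L] [Module R L]
variable (G : CompleteDGLA R L)

/-- The adjoint action `ad_λ = [λ, -]`. -/
def ad : L → L → L := fun lam y => G.bracket lam y

/-- The Maurer--Cartan equation `D φ + ½ [φ, φ] = 0` for `φ` of degree `-1`,
with respect to a (possibly twisted) differential `D`. -/
def IsMCWith [Algebra ℚ R] (D : L → L) (φ : L) : Prop :=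
  φ ∈ G.gr (-1) ∧ D φ + algebraMap ℚ R (1 / 2 : ℚ) • G.bracket φ φ = 0

/-- Maurer--Cartan elements of the complete dg Lie algebra `G`. -/
def IsMC [Algebra ℚ R] (φ : L) : Prop := G.IsMCWith (fun x => G.d x) φ

/-- The differential `d^ψ = d + [ψ, -]` of the twisted dg Lie algebra `g^ψ`. -/
def dTwist (ψ : L) : L → L := fun x => G.d x + G.bracket ψ x

/-- The gauge action with respect to the (possibly twisted) differential `D`. -/
def gaugeWith [Algebra ℚ R] (D : L → L) (lam φ : L) : L :=
  gaugeSeries G.F G.ad D lam φ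

/-- The gauge action `λ · φ` of `λ ∈ g_0` on Maurer--Cartan elements. -/
def gauge [Algebra ℚ R] (lam φ : L) : L := G.gaugeWith (fun x => G.d x) lam φ

/-- Gauge equivalence of Maurer--Cartan elements (Definition 1.4). -/
def GaugeEquiv [Algebra ℚ R] (φ ψ : L) : Prop :=
  ∃ lam ∈ G.gr 0, G.gauge lam φ = ψ

/-- Vanishing of the obstruction class `θ_k ∈ H_{-1}(g / F^{k+1} g)` of `x`,
with respect to the (possibly twisted) differential `D`. -/
def ObstructionZero (D : L → L) (k : ℕ) (x : L) : Prop :=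
  ObstructionZeroG G.F (G.gr 0) D k x

/-- `φ` admits a gauge triviality sequence of length `n ∈ [1, ∞]` in `G`, for the
(possibly twisted) differential `D` (Definition 1.10). -/
def HasGTSeq [Algebra ℚ R] (D : L → L) (φ : L) (n : ℕ∞) : Prop :=
  HasGTSeqG G.F (G.gr 0) G.ad D φ n

/-- The gauge equivalence degree of `φ` and `ψ` (Definition 1.12) is `n`:
`φ - ψ` admits a gauge triviality sequence of length `n` in the twisted dg Lie
algebra `g^ψ`. -/
def GaugeDegree [Algebra ℚ R] (φ ψ : L) (n : ℕ∞) : Prop :=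
  G.HasGTSeq (G.dTwist ψ) (φ - ψ) n

end CompleteDGLA

end PaperGauge

namespace PaperGauge

lemma limOfF_spec {R : Type*} [CommRing R] {N : Type*} [AddCommGroup N] [Module R N]
    (F : ℕ → Submodule R N) (x : ℕ → N)
    (hex : ∃ y : N, ∀ n, y - x n ∈ F (n + 1)) :
    ∀ n, limOfF F x - x n ∈ F (n + 1) := by
  unfold limOfF
  rw [dif_pos hex]
  exact hex.choose_spec

namespace CompleteDGLA

variable {R : Type*} [CommRing R] {L : Type*} [AddCommGroup L] [Module R L]

lemma F_le (G : CompleteDGLA R L) {a b : ℕ} (h : a ≤ b) : G.F b ≤ G.F a := by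
  induction b, h using Nat.le_induction with
  | base => exact le_rfl
  | succ b hb ih => exact (G.F_antitone b).trans ih

lemma mem_F_one (G : CompleteDGLA R L) (x : L) : x ∈ G.F 1 := by
  rw [G.F_one]; trivial

lemma ad_iter_mem (G : CompleteDGLA R L) (υ x : L) (k m : ℕ) (hx : x ∈ G.F m) :
    (G.ad υ)^[k] x ∈ G.F (m + k) := by
  induction k with
  | zero => simpa using hx
  | succ k ih =>
    rw [Function.iterate_succ_apply']
    have h2 : m + (k + 1) = 1 + (m + k) := by omega
    rw [h2]
    exact G.bracket_F 1 (m + k) υ _ (G.mem_F_one υ) ih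

/-- Key computation: if `φ ∈ F n`, `n ≥ 1`, `d υ ∈ F m`, `m ≤ n`, then
`υ · φ ≡ φ - d υ` modulo `F (m+1)`. -/
lemma gauge_sub_mem {R : Type*} [CommRing R] [Algebra ℚ R] {L : Type*} [AddCommGroup L]
    [Module R L] (G : CompleteDGLA R L) (n m : ℕ) (hn : 1 ≤ n) (hm : m ≤ n)
    (υ φ : L) (hφ : φ ∈ G.F n) (hd : G.d υ ∈ G.F m) :
    G.gauge υ φ - (φ - G.d υ) ∈ G.F (m + 1) := by
  set x : ℕ → L := fun M =>
    (∑ k ∈ Finset.range (M + 1),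
        algebraMap ℚ R ((Nat.factorial k : ℚ))⁻¹ • ((G.ad υ)^[k] φ)) -
      ∑ k ∈ Finset.range (M + 1),
        algebraMap ℚ R ((Nat.factorial (k + 1) : ℚ))⁻¹ • ((G.ad υ)^[k] (G.d υ)) with hx
  have hcauchy : ∀ M, x (M + 1) - x M ∈ G.F (M + 2) := by
    intro M
    have heq : x (M + 1) - x M =
        algebraMap ℚ R ((Nat.factorial (M + 1) : ℚ))⁻¹ • ((G.ad υ)^[M + 1] φ) -
        algebraMap ℚ R ((Nat.factorial (M + 2) : ℚ))⁻¹ • ((G.ad υ)^[M + 1] (G.d υ)) := by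
      simp only [hx, Finset.sum_range_succ]
      abel
    rw [heq]
    refine Submodule.sub_mem _ ?_ ?_
    · exact G.F_le (by omega) <| Submodule.smul_mem _ _ (G.ad_iter_mem υ φ (M + 1) n hφ)
    · exact G.F_le (by omega) <| Submodule.smul_mem _ _
        (G.ad_iter_mem υ (G.d υ) (M + 1) 1 (G.mem_F_one _))
  have hex : ∃ y : L, ∀ M, y - x M ∈ G.F (M + 1) := G.complete x (fun M => G.F_antitone (M + 1) (hcauchy M))
  have hspec : ∀ M, G.gauge υ φ - x M ∈ G.F (M + 1) :=
    limOfF_spec G.F x hex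
  have h1 : G.gauge υ φ - x n ∈ G.F (m + 1) := G.F_le (by omega) (hspec n)
  have h2 : x n - (φ - G.d υ) ∈ G.F (m + 1) := by
    have heq : x n - (φ - G.d υ) =
        (∑ k ∈ Finset.range n,
          algebraMap ℚ R ((Nat.factorial (k + 1) : ℚ))⁻¹ • ((G.ad υ)^[k + 1] φ)) -
        ∑ k ∈ Finset.range n,
          algebraMap ℚ R ((Nat.factorial (k + 2) : ℚ))⁻¹ • ((G.ad υ)^[k + 1] (G.d υ)) := by
      simp only [hx, Finset.sum_range_succ']
      simp [Nat.factorial]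
      abel
    rw [heq]
    refine Submodule.sub_mem _ (Submodule.sum_mem _ fun k _ => ?_)
      (Submodule.sum_mem _ fun k _ => ?_)
    · exact G.F_le (by omega) <| Submodule.smul_mem _ _ (G.ad_iter_mem υ φ (k + 1) n hφ)
    · exact G.F_le (by omega) <| Submodule.smul_mem _ _ (G.ad_iter_mem υ (G.d υ) (k + 1) m hd)
  have := Submodule.add_mem _ h1 h2
  simpa using this

end CompleteDGLA


/-- Proposition 1.8 of the paper. Let `h` be a complete dg Lie
algebra over a `ℚ`-algebra, `n ≥ 1`, and let `φ ∈ MC(h)` with `φ ∈ F^n h`. The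
obstruction class `θ_n = [π_{n+1}(φ)] ∈ H_{-1}(h / F^{n+1} h)` vanishes if and
only if there exists `υ ∈ h_0` with `υ · φ ∈ F^{n+1} h`. -/
theorem statement1 {R L : Type*} [CommRing R] [Algebra ℚ R] [AddCommGroup L]
    [Module R L] (G : CompleteDGLA R L) (n : ℕ) (hn : 1 ≤ n)
    (φ : L) (hφ : G.IsMC φ) (hφF : φ ∈ G.F n) :
    G.ObstructionZero (fun x => G.d x) n φ ↔
      ∃ υ ∈ G.gr 0, G.gauge υ φ ∈ G.F (n + 1) := by
  constructor
  · rintro ⟨υ, hυ0, hυF⟩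
    refine ⟨υ, hυ0, ?_⟩
    have hdυ : G.d υ ∈ G.F n := by
      have : G.d υ = φ - (φ - G.d υ) := by abel
      rw [this]
      exact Submodule.sub_mem _ hφF (G.F_antitone n hυF)
    have hkey := G.gauge_sub_mem n n hn le_rfl υ φ hφF hdυ
    have := Submodule.add_mem _ hkey hυF
    simpa using this
  · rintro ⟨υ, hυ0, hυF⟩
    have hdn : G.d υ ∈ G.F n := by
      have key : ∀ m : ℕ, 1 ≤ m → m ≤ n → G.d υ ∈ G.F m := by
        intro m hm1
        induction m with
        | zero => omega
        | succ m ih =>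
          intro hmn
          rcases Nat.eq_or_lt_of_le hm1 with h1 | h1
          · rw [← h1]; exact G.mem_F_one _
          · have hm : 1 ≤ m := by omega
            have hdm : G.d υ ∈ G.F m := ih hm (by omega)
            have hkey := G.gauge_sub_mem n m hn (by omega) υ φ hφF hdm
            have h2 : φ - G.d υ ∈ G.F (m + 1) := by
              have := Submodule.sub_mem _ (G.F_le (by omega : m + 1 ≤ n + 1) hυF) hkey
              simpa using this
            have := Submodule.sub_mem _ (G.F_le (by omega : m + 1 ≤ n) hφF) h2
            simpa using this
      exact key n hn le_rfl
    have hkey := G.gauge_sub_mem n n hn le_rfl υ φ hφF hdn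
    have := Submodule.sub_mem _ hυF hkey
    have h2 : φ - G.d υ ∈ G.F (n + 1) := by simpa using this
    exact ⟨υ, hυ0, h2⟩

end PaperGauge
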